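/- Let m be a positive integer. There exist positive constants C and C_m such that for every real x > 5, | Σ_{dℓ ≤ x} ((μ*ψ)(d)/d)·ℓ^{−2m} − [ (ζ(1+2m)/ζ(4)) x + Σ_{d ≤ x} ((|μ|*μ)(d)/d) Δ_{−2m}(x/d) − ζ(2m)/(2ζ(2)) ] | ≤ C_m · δ(x), where the first sum runs over pairs of positive integers (d, ℓ) with dℓ ≤ x and δ(x) = exp(−C (log x)^{3/5}/(log log x)^{1/5}). -/

import Mathlib

open Finset

/-- `Δ_{-2m}(x)`, the error term in the generalized divisor problem for `σ_{-2m}`. -/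
noncomputable def genDivisorError (m : ℕ) (x : ℝ) : ℂ :=
  (∑ n ∈ Finset.Icc 1 ⌊x⌋₊, ∑ d ∈ n.divisors, ((d : ℂ) ^ (2 * m))⁻¹ : ℂ)
    - riemannZeta (1 + 2 * m) * x + riemannZeta (2 * m) / 2

/-- `δ(x) = exp(-C (log x)^{3/5} / (log log x)^{1/5})`. -/
noncomputable def deltaFn (C x : ℝ) : ℝ :=
  Real.exp (-C * (Real.log x) ^ ((3 : ℝ) / 5) / (Real.log (Real.log x)) ^ ((1 : ℝ) / 5))

/-- The Dedekind function `ψ = id * |μ|`. -/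
def dedekindPsi (n : ℕ) : ℤ :=
  ∑ d ∈ n.divisors, (d : ℤ) * |ArithmeticFunction.moebius (n / d)|

/-- The Dirichlet convolution `μ * ψ` evaluated at `n`. -/
def moebiusConvPsi (n : ℕ) : ℤ :=
  ∑ d ∈ n.divisors, ArithmeticFunction.moebius d * dedekindPsi (n / d)

/-- The Dirichlet convolution `|μ| * μ` evaluated at `n`. -/
def absMoebiusConvMoebius (n : ℕ) : ℤ :=
  ∑ d ∈ n.divisors, |ArithmeticFunction.moebius d| * ArithmeticFunction.moebius (n / d)

open ArithmeticFunction
open scoped ArithmeticFunction.Moebius ArithmeticFunction.zeta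

def auxMabs : ArithmeticFunction ℤ := ⟨fun n => |μ n|, by simp⟩

lemma auxMabs_mult : auxMabs.IsMultiplicative :=
  ⟨by simp [auxMabs], fun {m n} h => by
    simp only [auxMabs, coe_mk, isMultiplicative_moebius.map_mul_of_coprime h, abs_mul]⟩

noncomputable def auxSqf : ArithmeticFunction ℤ :=
  ⟨fun n => if IsSquare n then μ n.sqrt else 0, by
    show (if IsSquare 0 then μ (Nat.sqrt 0) else 0) = 0
    rw [if_pos ⟨0, rfl⟩]; simp⟩

lemma auxSqf_apply_sq (k : ℕ) : auxSqf (k ^ 2) = μ k := by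
  classical
  show (if IsSquare (k ^ 2) then μ (Nat.sqrt (k ^ 2)) else 0) = μ k
  rw [if_pos ⟨k, sq k⟩, Nat.sqrt_eq']

lemma auxSqf_apply_of_not_isSquare {n : ℕ} (h : ¬ IsSquare n) : auxSqf n = 0 := by
  classical
  show (if IsSquare n then μ (Nat.sqrt n) else 0) = 0
  rw [if_neg h]

lemma isSquare_of_coprime_mul {m n : ℕ} (h : m.Coprime n) (hsq : IsSquare (m * n)) :
    IsSquare m := by
  obtain ⟨c, hc⟩ := hsq
  have hu : IsUnit (GCDMonoid.gcd m n) := by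
    rw [Nat.isUnit_iff]
    exact h
  obtain ⟨d, hd⟩ := exists_eq_pow_of_mul_eq_pow hu (k := 2) (by rw [hc]; ring)
  exact ⟨d, by rw [hd]; ring⟩

lemma auxSqf_mult : auxSqf.IsMultiplicative := by
  classical
  constructor
  · simpa using auxSqf_apply_sq 1
  · intro m n h
    by_cases hmn : IsSquare (m * n)
    · have hm : IsSquare m := isSquare_of_coprime_mul h hmn
      have hn : IsSquare n := isSquare_of_coprime_mul h.symm (mul_comm m n ▸ hmn)
      obtain ⟨a, rfl⟩ := hm
      obtain ⟨b, rfl⟩ := hn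
      have hab : a.Coprime b :=
        Nat.Coprime.coprime_dvd_left ⟨a, rfl⟩ (Nat.Coprime.coprime_dvd_right ⟨b, rfl⟩ h)
      have h2 : a * a * (b * b) = (a * b) ^ 2 := by ring
      rw [h2, ← sq a, ← sq b, auxSqf_apply_sq, auxSqf_apply_sq, auxSqf_apply_sq,
        isMultiplicative_moebius.map_mul_of_coprime hab]
    · rw [auxSqf_apply_of_not_isSquare hmn]
      have h3 : ¬ (IsSquare m ∧ IsSquare n) := by
        rintro ⟨⟨a, rfl⟩, ⟨b, rfl⟩⟩
        exact hmn ⟨a * b, by ring⟩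
      rcases not_and_or.mp h3 with h' | h' <;>
        rw [auxSqf_apply_of_not_isSquare h'] <;> ring

lemma prime_pow_not_isSquare {p i : ℕ} (hp : p.Prime) (hi : ¬ Even i) : ¬ IsSquare (p ^ i) := by
  rintro ⟨c, hc⟩
  have hcd : c ∣ p ^ i := ⟨c, hc⟩
  obtain ⟨j, hj, rfl⟩ := (Nat.dvd_prime_pow hp).mp hcd
  rw [← pow_add] at hc
  have : i = j + j := Nat.pow_right_injective hp.two_le hc
  exact hi ⟨j, by omega⟩

lemma aux_conv_eq_sqf : auxMabs * (μ : ArithmeticFunction ℤ) = auxSqf := by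
  rw [IsMultiplicative.eq_iff_eq_on_prime_powers _
    (auxMabs_mult.mul isMultiplicative_moebius) _ auxSqf_mult]
  intro p i hp
  rw [mul_apply, Nat.sum_divisorsAntidiagonal (f := fun d e => auxMabs d * μ e),
    Nat.sum_divisors_prime_pow hp]
  have hsum : ∑ j ∈ range (i + 1), auxMabs (p ^ j) * μ (p ^ i / p ^ j)
      = ∑ j ∈ range (i + 1), (if j ≤ 1 then μ (p ^ (i - j)) else 0) := by
    refine Finset.sum_congr rfl fun j hj => ?_
    have hji : j ≤ i := by simpa [Nat.lt_succ_iff] using hj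
    rw [Nat.pow_div hji hp.pos]
    by_cases h1 : j ≤ 1
    · rw [if_pos h1]
      have hm : auxMabs (p ^ j) = 1 := by
        interval_cases j
        · simp [auxMabs]
        · show |μ (p ^ 1)| = 1
          rw [pow_one, moebius_apply_prime hp]; norm_num
      rw [hm, one_mul]
    · rw [if_neg h1]
      have hm : auxMabs (p ^ j) = 0 := by
        show |μ (p ^ j)| = 0
        rw [moebius_apply_prime_pow hp (by omega), if_neg (by omega)]; simp
      rw [hm, zero_mul]
  rw [hsum]
  rcases i with _ | _ | k
  ·
      rw [Finset.sum_range_one, if_pos (Nat.zero_le 1), Nat.sub_zero, pow_zero]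
      simpa using (auxSqf_apply_sq 1).symm

  ·
      rw [auxSqf_apply_of_not_isSquare (prime_pow_not_isSquare hp (by decide))]
      rw [Finset.sum_range_succ, Finset.sum_range_one]
      simp [moebius_apply_prime hp]
  ·
      have hzero : ∀ j ∈ range (k + 3), j ∉ range 2 →
          (if j ≤ 1 then μ (p ^ (k + 2 - j)) else 0) = 0 := by
        intro j _ hj2
        rw [if_neg (by simp at hj2; omega)]
      rw [← Finset.sum_subset (Finset.range_subset_range.mpr (by omega)) hzero,
        Finset.sum_range_succ, Finset.sum_range_one, if_pos (by norm_num),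
        if_pos (by norm_num)]
      rcases Nat.eq_zero_or_pos k with rfl | hk
      · norm_num [moebius_apply_prime_pow hp, moebius_apply_prime hp, auxSqf_apply_sq p]
      · have h1 : μ (p ^ (k + 2 - 0)) = 0 := by
          rw [moebius_apply_prime_pow hp (by omega), if_neg (by omega)]
        have h2 : μ (p ^ (k + 2 - 1)) = 0 := by
          rw [moebius_apply_prime_pow hp (by omega), if_neg (by omega)]
        rw [h1, h2]
        by_cases he : Even (k + 2)
        · obtain ⟨t, ht⟩ := he
          have : p ^ (k + 2) = (p ^ t) ^ 2 := by rw [← pow_mul]; congr 1; omega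
          rw [this, auxSqf_apply_sq, moebius_apply_prime_pow hp (by omega),
            if_neg (by omega)]
          simp
        · rw [auxSqf_apply_of_not_isSquare (prime_pow_not_isSquare hp he)]
          simp

def auxI : ArithmeticFunction ℤ := ⟨fun n => n, by simp⟩

lemma absM_eq (n : ℕ) : absMoebiusConvMoebius n = (auxMabs * (μ : ArithmeticFunction ℤ)) n := by
  rw [mul_apply, Nat.sum_divisorsAntidiagonal (f := fun d e => auxMabs d * μ e)]
  rfl

lemma psi_eq (n : ℕ) : dedekindPsi n = (auxI * auxMabs) n := by
  rw [mul_apply, Nat.sum_divisorsAntidiagonal (f := fun d e => auxI d * auxMabs e)]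
  rfl

lemma mps_eq (n : ℕ) :
    moebiusConvPsi n = (((auxMabs * (μ : ArithmeticFunction ℤ)) * auxI)) n := by
  have h1 : moebiusConvPsi n = ((μ : ArithmeticFunction ℤ) * (auxI * auxMabs)) n := by
    rw [mul_apply, Nat.sum_divisorsAntidiagonal (f := fun d e => μ d * (auxI * auxMabs) e)]
    unfold moebiusConvPsi
    exact Finset.sum_congr rfl fun d _ => by rw [psi_eq]
  rw [h1]; congr 1; ring

lemma mps_div (n : ℕ) (hn : n ≠ 0) :
    (moebiusConvPsi n : ℂ) / n = ∑ d ∈ n.divisors, (absMoebiusConvMoebius d : ℂ) / d := by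
  rw [mps_eq, mul_apply, Nat.sum_divisorsAntidiagonal
    (f := fun d e => (auxMabs * (μ : ArithmeticFunction ℤ)) d * auxI e)]
  push_cast
  rw [Finset.sum_div]
  refine Finset.sum_congr rfl fun d hd => ?_
  obtain ⟨hdvd, -⟩ := Nat.mem_divisors.mp hd
  have hd0 : (d : ℂ) ≠ 0 := Nat.cast_ne_zero.mpr fun h => hn (by simpa [h] using hdvd)
  have hn0 : (n : ℂ) ≠ 0 := Nat.cast_ne_zero.mpr hn
  have hcast : ((n / d : ℕ) : ℂ) = (n : ℂ) / d := by
    rw [Nat.cast_div hdvd hd0]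
  show ((auxMabs * (μ : ArithmeticFunction ℤ)) d : ℂ) * ((auxI (n/d) : ℤ) : ℂ) / n
      = (absMoebiusConvMoebius d : ℂ) / d
  rw [absM_eq]
  have : ((auxI (n/d) : ℤ) : ℂ) = (n : ℂ) / d := by
    show (((n/d : ℕ) : ℤ) : ℂ) = _
    rw [Int.cast_natCast, hcast]
  rw [this]
  field_simp

lemma hyperbola (N : ℕ) (F : ℕ → ℕ → ℂ) :
    ∑ d ∈ Icc 1 N, ∑ e ∈ Icc 1 (N / d), F d e
      = ∑ n ∈ Icc 1 N, ∑ p ∈ n.divisorsAntidiagonal, F p.1 p.2 := by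
  rw [Finset.sum_sigma', Finset.sum_sigma']
  refine Finset.sum_nbij' (i := fun x => ⟨x.1 * x.2, (x.1, x.2)⟩)
    (j := fun y => ⟨y.2.1, y.2.2⟩) ?_ ?_ ?_ ?_ ?_
  · rintro ⟨d, e⟩ hx
    simp only [Finset.mem_sigma, Finset.mem_Icc] at hx
    obtain ⟨⟨hd1, hdN⟩, he1, heN⟩ := hx
    have hd0 : 0 < d := hd1
    have hde : d * e ≤ N := by
      have h := (Nat.le_div_iff_mul_le hd0).mp heN
      calc d * e = e * d := mul_comm d e
        _ ≤ N := h
    simp only [Finset.mem_sigma, Finset.mem_Icc, Nat.mem_divisorsAntidiagonal]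
    exact ⟨⟨Nat.one_le_iff_ne_zero.mpr (by positivity), hde⟩, trivial, by positivity⟩
  · rintro ⟨n, d, e⟩ hx
    simp only [Finset.mem_sigma, Finset.mem_Icc, Nat.mem_divisorsAntidiagonal] at hx
    obtain ⟨⟨hn1, hnN⟩, hde, hn0⟩ := hx
    simp only [Finset.mem_sigma, Finset.mem_Icc]
    have hd0 : 0 < d := by
      rcases Nat.eq_zero_or_pos d with rfl | h
      · simp at hde; omega
      · exact h
    have he0 : 0 < e := by
      rcases Nat.eq_zero_or_pos e with rfl | h
      · simp at hde; omega
      · exact h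
    refine ⟨⟨hd0, le_trans (Nat.le_of_dvd (by omega) ⟨e, hde.symm⟩) hnN⟩,
      he0, (Nat.le_div_iff_mul_le hd0).mpr (by rw [mul_comm]; omega)⟩
  · rintro ⟨d, e⟩ _; rfl
  · rintro ⟨n, d, e⟩ hx
    simp only [Finset.mem_sigma, Finset.mem_Icc, Nat.mem_divisorsAntidiagonal] at hx
    simp [hx.2.1]
  · rintro ⟨d, e⟩ _; rfl

lemma absM_eq_sqf (n : ℕ) : absMoebiusConvMoebius n = auxSqf n := by
  rw [absM_eq, aux_conv_eq_sqf]

lemma sq_reindex (N : ℕ) (w : ℕ → ℂ) :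
    ∑ d ∈ Icc 1 N, (absMoebiusConvMoebius d : ℂ) * w d
      = ∑ k ∈ Icc 1 (Nat.sqrt N), (μ k : ℂ) * w (k ^ 2) := by
  classical
  have h1 : ∑ d ∈ Icc 1 N, (absMoebiusConvMoebius d : ℂ) * w d
      = ∑ d ∈ (Icc 1 N).filter IsSquare, (absMoebiusConvMoebius d : ℂ) * w d := by
    refine (Finset.sum_filter_of_ne fun d _ hne => ?_).symm
    by_contra h
    rw [absM_eq_sqf, auxSqf_apply_of_not_isSquare h] at hne
    simp at hne
  rw [h1]
  refine Finset.sum_nbij' (i := fun d => Nat.sqrt d) (j := fun k => k ^ 2) ?_ ?_ ?_ ?_ ?_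
  · intro d hd
    simp only [Finset.mem_filter, Finset.mem_Icc] at hd
    obtain ⟨⟨hd1, hdN⟩, c, rfl⟩ := hd
    simp only [Finset.mem_Icc]
    rw [Nat.sqrt_eq]
    refine ⟨?_, Nat.le_sqrt.mpr hdN⟩
    rcases Nat.eq_zero_or_pos c with rfl | h
    · simp at hd1
    · exact h
  · intro k hk
    simp only [Finset.mem_Icc] at hk
    simp only [Finset.mem_filter, Finset.mem_Icc]
    exact ⟨⟨Nat.one_le_iff_ne_zero.mpr (pow_ne_zero 2 (by omega)),
      by rw [pow_two]; exact Nat.le_sqrt.mp hk.2⟩, ⟨k, (pow_two k)⟩⟩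
  · intro d hd
    simp only [Finset.mem_filter, Finset.mem_Icc] at hd
    obtain ⟨-, c, rfl⟩ := hd
    rw [Nat.sqrt_eq, pow_two]
  · intro k _
    rw [pow_two, Nat.sqrt_eq]
  · intro d hd
    simp only [Finset.mem_filter, Finset.mem_Icc] at hd
    obtain ⟨-, c, rfl⟩ := hd
    rw [absM_eq_sqf, Nat.sqrt_eq, ← pow_two, auxSqf_apply_sq]

lemma term_norm_le (s : ℕ) (n : ℕ) (hn : n ≠ 0) :
    ‖LSeries.term (fun k => ((μ k : ℤ) : ℂ)) s n‖ ≤ 1 / (n : ℝ) ^ s := by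
  rw [LSeries.term_of_ne_zero hn]
  rw [norm_div]
  have h1 : ‖((n : ℂ) ^ (s : ℂ))‖ = (n : ℝ) ^ s := by
    rw [Complex.cpow_natCast, norm_pow, Complex.norm_natCast]
  rw [h1]
  have hnpos : (0:ℝ) < (n:ℝ) ^ s := by positivity
  rw [div_le_div_iff₀ hnpos hnpos]
  have : ‖((μ n : ℤ) : ℂ)‖ ≤ 1 := by
    rw [Complex.norm_intCast]
    exact_mod_cast (by exact_mod_cast abs_moebius_le_one : |(μ n : ℤ)| ≤ 1)
  nlinarith [hnpos]

lemma moebius_partial_tail (s : ℕ) (hs : 2 ≤ s) (K : ℕ) (hK : 1 ≤ K) :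
    ‖(∑ k ∈ Icc 1 K, (μ k : ℂ) / (k : ℂ) ^ s) - (riemannZeta s)⁻¹‖
      ≤ 1 / (K : ℝ) ^ (s - 1) := by
  have hre : 1 < ((s : ℕ) : ℂ).re := by
    rw [Complex.natCast_re]; exact_mod_cast (by omega : 1 < s)
  have hsummable : LSeriesSummable (fun k => ((μ k : ℤ) : ℂ)) s :=
    LSeriesSummable_moebius_iff.mpr hre
  have hLμ : LSeries (fun k => ((μ k : ℤ) : ℂ)) s = (riemannZeta s)⁻¹ := by
    have h1 := LSeries_zeta_mul_Lseries_moebius (s := (s : ℂ)) hre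
    rw [LSeries_zeta_eq_riemannZeta hre] at h1
    exact eq_inv_of_mul_eq_one_left (by rw [mul_comm]; exact h1)
  have hpartial : ∑ n ∈ range (K + 1), LSeries.term (fun k => ((μ k : ℤ) : ℂ)) s n
      = ∑ k ∈ Icc 1 K, (μ k : ℂ) / (k : ℂ) ^ s := by
    have hins : range (K + 1) = insert 0 (Icc 1 K) := by
      ext a; simp [Nat.lt_succ_iff]; omega
    rw [hins, Finset.sum_insert (by simp), LSeries.term_zero, zero_add]
    refine Finset.sum_congr rfl fun n hn => ?_
    have hn0 : n ≠ 0 := by simp only [Finset.mem_Icc] at hn; omega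
    rw [LSeries.term_of_ne_zero hn0, Complex.cpow_natCast]
  have hkey := LSeries.term (fun k => ((μ k : ℤ) : ℂ)) s
  have hsum := Summable.sum_add_tsum_nat_add (f := LSeries.term (fun k => ((μ k : ℤ) : ℂ)) s)
    (K + 1) hsummable
  -- partial - L = - tail
  have hdiff : (∑ k ∈ Icc 1 K, (μ k : ℂ) / (k : ℂ) ^ s) - (riemannZeta s)⁻¹
      = -(∑' i : ℕ, LSeries.term (fun k => ((μ k : ℤ) : ℂ)) s (i + (K + 1))) := by
    rw [← hLμ, ← hpartial]
    unfold LSeries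
    rw [← hsum]
    ring
  rw [hdiff, norm_neg]
  have hshift : Summable fun i : ℕ =>
      LSeries.term (fun k => ((μ k : ℤ) : ℂ)) s (i + (K + 1)) :=
    (summable_nat_add_iff (K + 1)).mpr hsummable
  have hnorm : Summable fun i : ℕ =>
      ‖LSeries.term (fun k => ((μ k : ℤ) : ℂ)) s (i + (K + 1))‖ :=
    summable_norm_iff.mpr hshift
  calc ‖∑' i : ℕ, LSeries.term (fun k => ((μ k : ℤ) : ℂ)) s (i + (K + 1))‖
      ≤ ∑' i : ℕ, ‖LSeries.term (fun k => ((μ k : ℤ) : ℂ)) s (i + (K + 1))‖ :=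
        norm_tsum_le_tsum_norm hnorm
    _ ≤ 1 / (K : ℝ) ^ (s - 1) := by
        refine Summable.tsum_le_of_sum_le hnorm fun I => ?_
        obtain ⟨M, hM⟩ := I.exists_nat_subset_range
        have hKR : (0:ℝ) < (K:ℝ) := by exact_mod_cast hK
        set g : ℕ → ℝ := fun i => 1 / ((K : ℝ) ^ (s - 2) * ((i : ℝ) + K)) with hg
        have hterm : ∀ i : ℕ, ‖LSeries.term (fun k => ((μ k : ℤ) : ℂ)) s (i + (K + 1))‖
            ≤ g i - g (i + 1) := by
          intro i
          have hb : (0:ℝ) < (i : ℝ) + K := by positivity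
          have hb1 : (0:ℝ) < (i : ℝ) + K + 1 := by linarith
          have hgd : g i - g (i + 1) = 1 / ((K:ℝ) ^ (s-2) * (((i:ℝ) + K) * ((i:ℝ) + K + 1))) := by
            rw [hg]
            push_cast
            field_simp
            ring
          refine le_trans (term_norm_le s (i + (K + 1)) (by omega)) ?_
          rw [hgd]
          have hcast : ((i + (K + 1) : ℕ) : ℝ) = (i : ℝ) + K + 1 := by push_cast; ring
          rw [hcast]
          apply one_div_le_one_div_of_le (by positivity)
          have hsplit : ((i:ℝ) + K + 1) ^ s = ((i:ℝ) + K + 1) ^ 2 * ((i:ℝ) + K + 1) ^ (s - 2) := by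
            rw [← pow_add]; congr 1; omega
          rw [hsplit]
          have h1 : (K:ℝ) ^ (s-2) ≤ ((i:ℝ) + K + 1) ^ (s-2) :=
            pow_le_pow_left₀ (le_of_lt hKR) (by linarith [Nat.cast_nonneg (α := ℝ) i]) _
          have h2 : ((i:ℝ) + K) * ((i:ℝ) + K + 1) ≤ ((i:ℝ) + K + 1) ^ 2 := by nlinarith
          calc (K:ℝ) ^ (s-2) * (((i:ℝ) + K) * ((i:ℝ) + K + 1))
              ≤ ((i:ℝ) + K + 1)^(s-2) * (((i:ℝ) + K + 1) ^ 2) := by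
                apply mul_le_mul h1 h2 (by positivity) (by positivity)
            _ = ((i:ℝ) + K + 1) ^ 2 * ((i:ℝ) + K + 1) ^ (s - 2) := by ring
        calc ∑ i ∈ I, ‖LSeries.term (fun k => ((μ k : ℤ) : ℂ)) s (i + (K + 1))‖
            ≤ ∑ i ∈ range M, ‖LSeries.term (fun k => ((μ k : ℤ) : ℂ)) s (i + (K + 1))‖ :=
              Finset.sum_le_sum_of_subset_of_nonneg hM fun _ _ _ => norm_nonneg _
          _ ≤ ∑ i ∈ range M, (g i - g (i + 1)) := Finset.sum_le_sum fun i _ => hterm i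
          _ = g 0 - g M := Finset.sum_range_sub' g M
          _ ≤ g 0 := by
              have : 0 ≤ g M := by rw [hg]; positivity
              linarith
          _ = 1 / (K : ℝ) ^ (s - 1) := by
              rw [hg]
              simp only [Nat.cast_zero, zero_add]
              rw [← pow_succ]
              congr 2
              omega

noncomputable def auxC : ℝ := (Real.log (Real.log 5)) ^ ((1 : ℝ) / 5) / 2

lemma log_five_gt_one : 1 < Real.log 5 := by
  rw [Real.lt_log_iff_exp_lt (by norm_num)]
  calc Real.exp 1 < 2.7182818286 := Real.exp_one_lt_d9
    _ < 5 := by norm_num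

lemma auxC_pos : 0 < auxC := by
  have h : 0 < Real.log (Real.log 5) := Real.log_pos log_five_gt_one
  have := Real.rpow_pos_of_pos h ((1 : ℝ) / 5)
  unfold auxC; linarith

lemma delta_ge (x : ℝ) (hx : 5 < x) : 1 / Real.sqrt x ≤ deltaFn auxC x := by
  have hx0 : (0:ℝ) < x := by linarith
  have hL : 1 < Real.log x := lt_of_lt_of_le log_five_gt_one
    (Real.log_le_log (by norm_num) (by linarith))
  have hLL : Real.log (Real.log 5) ≤ Real.log (Real.log x) :=
    Real.log_le_log (by linarith [log_five_gt_one]) (Real.log_le_log (by norm_num) (by linarith))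
  have hLL0 : 0 < Real.log (Real.log 5) := Real.log_pos log_five_gt_one
  have h2C : 2 * auxC ≤ (Real.log (Real.log x)) ^ ((1:ℝ)/5) := by
    have := Real.rpow_le_rpow (le_of_lt hLL0) hLL (by norm_num : (0:ℝ) ≤ 1/5)
    unfold auxC; linarith
  have hCpos := auxC_pos
  have hden : (0:ℝ) < (Real.log (Real.log x)) ^ ((1:ℝ)/5) := lt_of_lt_of_le (by linarith) h2C
  have hnum : (0:ℝ) ≤ auxC * (Real.log x) ^ ((3:ℝ)/5) := by
    have := Real.rpow_nonneg (le_of_lt (lt_trans one_pos hL)) ((3:ℝ)/5)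
    positivity
  have key : auxC * (Real.log x) ^ ((3:ℝ)/5) / (Real.log (Real.log x)) ^ ((1:ℝ)/5)
      ≤ Real.log x / 2 := by
    have h1 : auxC * (Real.log x) ^ ((3:ℝ)/5) / (Real.log (Real.log x)) ^ ((1:ℝ)/5)
        ≤ auxC * (Real.log x) ^ ((3:ℝ)/5) / (2 * auxC) :=
      div_le_div_of_nonneg_left hnum (by linarith) h2C
    have h2 : (Real.log x) ^ ((3:ℝ)/5) ≤ Real.log x := by
      calc (Real.log x) ^ ((3:ℝ)/5) ≤ (Real.log x) ^ (1:ℝ) :=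
        Real.rpow_le_rpow_of_exponent_le (le_of_lt hL) (by norm_num)
      _ = Real.log x := Real.rpow_one _
    calc auxC * (Real.log x) ^ ((3:ℝ)/5) / (Real.log (Real.log x)) ^ ((1:ℝ)/5)
        ≤ auxC * (Real.log x) ^ ((3:ℝ)/5) / (2 * auxC) := h1
      _ = (Real.log x) ^ ((3:ℝ)/5) / 2 := by field_simp
      _ ≤ Real.log x / 2 := by linarith
  have hsqrt : 1 / Real.sqrt x = Real.exp (-(Real.log x / 2)) := by
    rw [Real.exp_neg]
    congr 1
    rw [one_div]
    congr 1
    rw [← Real.log_sqrt (le_of_lt hx0), Real.exp_log (Real.sqrt_pos.mpr hx0)]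
  rw [hsqrt]
  unfold deltaFn
  apply Real.exp_le_exp.mpr
  rw [neg_mul, neg_div]
  linarith

lemma nat_sqrt_bounds (x : ℝ) (hx : 5 < x) :
    2 ≤ Nat.sqrt ⌊x⌋₊ ∧ Real.sqrt x ≤ 2 * (Nat.sqrt ⌊x⌋₊ : ℝ) := by
  have hx0 : (0:ℝ) ≤ x := by linarith
  have hfl : 5 ≤ ⌊x⌋₊ := Nat.le_floor (by exact_mod_cast le_of_lt hx)
  have hK2 : 2 ≤ Nat.sqrt ⌊x⌋₊ := by
    calc 2 = Nat.sqrt 5 := by rw [show Nat.sqrt 5 = 2 from by norm_num]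
      _ ≤ Nat.sqrt ⌊x⌋₊ := Nat.sqrt_le_sqrt hfl
  refine ⟨hK2, ?_⟩
  set K := Nat.sqrt ⌊x⌋₊ with hK
  have h1 : (⌊x⌋₊ : ℕ) < (K + 1) ^ 2 := Nat.lt_succ_sqrt' ⌊x⌋₊
  have h2 : x < ((K:ℝ) + 1) ^ 2 := by
    calc x < (⌊x⌋₊ : ℝ) + 1 := Nat.lt_floor_add_one x
      _ ≤ ((K + 1 : ℕ) : ℝ) ^ 2 := by exact_mod_cast h1
      _ = ((K:ℝ) + 1) ^ 2 := by push_cast; ring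
  have h3 : ((K:ℝ) + 1) ≤ 2 * K := by
    have : (2:ℝ) ≤ K := by exact_mod_cast hK2
    linarith
  have h4 : x ≤ (2 * (K:ℝ)) ^ 2 := by nlinarith
  calc Real.sqrt x ≤ Real.sqrt ((2 * (K:ℝ)) ^ 2) := Real.sqrt_le_sqrt h4
    _ = 2 * (K:ℝ) := by
        rw [Real.sqrt_sq (by positivity)]

noncomputable def auxCC : ArithmeticFunction ℂ :=
  ⟨fun n => (moebiusConvPsi n : ℂ) / n, by simp [moebiusConvPsi]⟩

noncomputable def auxDA : ArithmeticFunction ℂ :=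
  ⟨fun n => (absMoebiusConvMoebius n : ℂ) / n, by simp [absMoebiusConvMoebius]⟩

noncomputable def auxHH (m : ℕ) : ArithmeticFunction ℂ :=
  ⟨fun n => if n = 0 then 0 else ((n : ℂ) ^ (2 * m))⁻¹, by simp⟩

lemma auxCC_eq (m : ℕ) : auxCC = auxDA * (ζ : ArithmeticFunction ℂ) := by
  ext n
  rcases eq_or_ne n 0 with rfl | hn
  · rw [ArithmeticFunction.map_zero, ArithmeticFunction.map_zero]
  · rw [coe_mul_zeta_apply]
    show (moebiusConvPsi n : ℂ) / n = ∑ d ∈ n.divisors, auxDA d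
    rw [mps_div n hn]
    rfl

lemma main_identity (m : ℕ) (x : ℝ) :
    ∑ d ∈ Icc 1 ⌊x⌋₊, ∑ ℓ ∈ Icc 1 ⌊x / d⌋₊,
        ((moebiusConvPsi d : ℂ) / d) * ((ℓ : ℂ) ^ (2 * m))⁻¹
      = ∑ d ∈ Icc 1 ⌊x⌋₊, ((absMoebiusConvMoebius d : ℂ) / d) *
          (∑ n ∈ Icc 1 ⌊x / d⌋₊, ∑ e ∈ n.divisors, ((e : ℂ) ^ (2 * m))⁻¹) := by
  have hfloor : ∀ d : ℕ, ⌊x / (d : ℝ)⌋₊ = ⌊x⌋₊ / d := fun d => Nat.floor_div_natCast x d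
  have step1 : ∑ d ∈ Icc 1 ⌊x⌋₊, ∑ ℓ ∈ Icc 1 ⌊x / d⌋₊,
        ((moebiusConvPsi d : ℂ) / d) * ((ℓ : ℂ) ^ (2 * m))⁻¹
      = ∑ d ∈ Icc 1 ⌊x⌋₊, ∑ ℓ ∈ Icc 1 (⌊x⌋₊ / d), auxCC d * auxHH m ℓ := by
    refine Finset.sum_congr rfl fun d hd => ?_
    rw [hfloor d]
    refine Finset.sum_congr rfl fun ℓ hℓ => ?_
    have hℓ0 : ℓ ≠ 0 := by simp only [Finset.mem_Icc] at hℓ; omega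
    show _ = auxCC d * (if ℓ = 0 then 0 else ((ℓ : ℂ) ^ (2 * m))⁻¹)
    rw [if_neg hℓ0]
    rfl
  have step2 : ∑ d ∈ Icc 1 ⌊x⌋₊, ∑ ℓ ∈ Icc 1 (⌊x⌋₊ / d), auxCC d * auxHH m ℓ
      = ∑ n ∈ Icc 1 ⌊x⌋₊, (auxCC * auxHH m) n := by
    rw [hyperbola ⌊x⌋₊ (fun d e => auxCC d * auxHH m e)]
    exact Finset.sum_congr rfl fun n _ => (mul_apply).symm
  have step3 : ∑ n ∈ Icc 1 ⌊x⌋₊, (auxCC * auxHH m) n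
      = ∑ n ∈ Icc 1 ⌊x⌋₊, (auxDA * ((ζ : ArithmeticFunction ℂ) * auxHH m)) n := by
    rw [auxCC_eq m, mul_assoc]
  have step4 : ∑ n ∈ Icc 1 ⌊x⌋₊, (auxDA * ((ζ : ArithmeticFunction ℂ) * auxHH m)) n
      = ∑ d ∈ Icc 1 ⌊x⌋₊, ∑ k ∈ Icc 1 (⌊x⌋₊ / d),
          auxDA d * ((ζ : ArithmeticFunction ℂ) * auxHH m) k := by
    rw [hyperbola ⌊x⌋₊ (fun d e => auxDA d * ((ζ : ArithmeticFunction ℂ) * auxHH m) e)]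
    exact Finset.sum_congr rfl fun n _ => (mul_apply).symm |>.symm
  rw [step1, step2, step3, step4]
  refine Finset.sum_congr rfl fun d hd => ?_
  rw [← hfloor d, Finset.mul_sum]
  refine Finset.sum_congr rfl fun k hk => ?_
  have hk0 : k ≠ 0 := by simp only [Finset.mem_Icc] at hk; omega
  congr 1
  rw [coe_zeta_mul_apply]
  refine Finset.sum_congr rfl fun e he => ?_
  have he0 : e ≠ 0 := Nat.pos_of_mem_divisors he |>.ne'
  show (if e = 0 then 0 else ((e : ℂ) ^ (2 * m))⁻¹) = _
  rw [if_neg he0]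

theorem moebius_conv_psi_quotient_hyperbola_sum (m : ℕ) (hm : 0 < m) :
    ∃ C > 0, ∃ Cm > 0, ∀ x : ℝ, x > 5 →
      ‖(∑ d ∈ Finset.Icc 1 ⌊x⌋₊, ∑ ℓ ∈ Finset.Icc 1 ⌊x / d⌋₊,
            ((moebiusConvPsi d : ℂ) / d) * ((ℓ : ℂ) ^ (2 * m))⁻¹)
        - ((riemannZeta (1 + 2 * m) / riemannZeta 4) * x
            + (∑ d ∈ Finset.Icc 1 ⌊x⌋₊,
                ((absMoebiusConvMoebius d : ℂ) / d) * genDivisorError m (x / d))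
            - riemannZeta (2 * m) / (2 * riemannZeta 2))‖
      ≤ Cm * deltaFn C x := by
  refine ⟨auxC, auxC_pos,
    8 * ‖riemannZeta (1 + 2 * m)‖ + ‖riemannZeta (2 * m)‖ + 1,
    by positivity, fun x hx => ?_⟩
  have hx0 : (0:ℝ) < x := by linarith
  obtain ⟨hK2, hsub⟩ := nat_sqrt_bounds x hx
  have hK1 : 1 ≤ Nat.sqrt ⌊x⌋₊ := by omega
  have hz4 : riemannZeta 4 ≠ 0 := by
    apply riemannZeta_ne_zero_of_one_lt_re
    norm_num
  have hz2 : riemannZeta 2 ≠ 0 := by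
    apply riemannZeta_ne_zero_of_one_lt_re
    norm_num
  have hE : ∀ d : ℕ, (∑ n ∈ Icc 1 ⌊x / (d:ℝ)⌋₊, ∑ e ∈ n.divisors, ((e:ℂ)^(2*m))⁻¹)
      = genDivisorError m (x / d) + riemannZeta (1 + 2 * m) * ((x/(d:ℝ) : ℝ) : ℂ)
        - riemannZeta (2 * m)/2 := by
    intro d; unfold genDivisorError; ring
  have expand : (∑ d ∈ Icc 1 ⌊x⌋₊, ((absMoebiusConvMoebius d : ℂ)/d) *
        (∑ n ∈ Icc 1 ⌊x / (d:ℝ)⌋₊, ∑ e ∈ n.divisors, ((e:ℂ)^(2*m))⁻¹))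
      = (∑ d ∈ Icc 1 ⌊x⌋₊, ((absMoebiusConvMoebius d : ℂ)/d) * genDivisorError m (x / d))
        + riemannZeta (1 + 2 * m) * (x:ℂ) *
            (∑ d ∈ Icc 1 ⌊x⌋₊, (absMoebiusConvMoebius d : ℂ) * (((d:ℂ))^2)⁻¹)
        - riemannZeta (2 * m)/2 *
            (∑ d ∈ Icc 1 ⌊x⌋₊, (absMoebiusConvMoebius d : ℂ) * ((d:ℂ))⁻¹) := by
    have h1 : ∀ d ∈ Icc 1 ⌊x⌋₊, ((absMoebiusConvMoebius d : ℂ)/d) *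
          (∑ n ∈ Icc 1 ⌊x / (d:ℝ)⌋₊, ∑ e ∈ n.divisors, ((e:ℂ)^(2*m))⁻¹)
        = ((absMoebiusConvMoebius d : ℂ)/d) * genDivisorError m (x / d)
          + riemannZeta (1 + 2 * m) * (x:ℂ) * ((absMoebiusConvMoebius d : ℂ) * (((d:ℂ))^2)⁻¹)
          - riemannZeta (2 * m)/2 * ((absMoebiusConvMoebius d : ℂ) * ((d:ℂ))⁻¹) := by
      intro d hd
      have hd1 : 1 ≤ d := (Finset.mem_Icc.mp hd).1
      have hd0 : (d:ℂ) ≠ 0 := Nat.cast_ne_zero.mpr (by omega)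
      have hxd : ((x/(d:ℝ) : ℝ) : ℂ) = (x:ℂ) / (d:ℂ) := by push_cast; rfl
      rw [hE d, hxd]
      field_simp
    rw [Finset.sum_congr rfl h1, Finset.sum_sub_distrib, Finset.sum_add_distrib,
      ← Finset.mul_sum, ← Finset.mul_sum]
  rw [main_identity m x, expand]
  have hrw : ((∑ d ∈ Icc 1 ⌊x⌋₊, ((absMoebiusConvMoebius d : ℂ)/d) * genDivisorError m (x / d))
        + riemannZeta (1 + 2 * m) * (x:ℂ) *
            (∑ d ∈ Icc 1 ⌊x⌋₊, (absMoebiusConvMoebius d : ℂ) * (((d:ℂ))^2)⁻¹)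
        - riemannZeta (2 * m)/2 *
            (∑ d ∈ Icc 1 ⌊x⌋₊, (absMoebiusConvMoebius d : ℂ) * ((d:ℂ))⁻¹))
      - ((riemannZeta (1 + 2 * m) / riemannZeta 4) * x
          + (∑ d ∈ Finset.Icc 1 ⌊x⌋₊,
              ((absMoebiusConvMoebius d : ℂ) / d) * genDivisorError m (x / d))
          - riemannZeta (2 * m) / (2 * riemannZeta 2))
      = riemannZeta (1 + 2 * m) * (x:ℂ) *
          ((∑ d ∈ Icc 1 ⌊x⌋₊, (absMoebiusConvMoebius d : ℂ) * (((d:ℂ))^2)⁻¹)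
            - (riemannZeta 4)⁻¹)
        - riemannZeta (2 * m)/2 *
          ((∑ d ∈ Icc 1 ⌊x⌋₊, (absMoebiusConvMoebius d : ℂ) * ((d:ℂ))⁻¹)
            - (riemannZeta 2)⁻¹) := by
    field_simp
    ring
  rw [hrw]
  have hS2 : (∑ d ∈ Icc 1 ⌊x⌋₊, (absMoebiusConvMoebius d : ℂ) * (((d:ℂ))^2)⁻¹)
      = ∑ k ∈ Icc 1 (Nat.sqrt ⌊x⌋₊), (μ k : ℂ)/(k:ℂ)^4 := by
    rw [sq_reindex ⌊x⌋₊ (fun d => ((d:ℂ)^2)⁻¹)]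
    refine Finset.sum_congr rfl fun k _ => ?_
    rw [div_eq_mul_inv]
    congr 2
    push_cast
    ring
  have hS1 : (∑ d ∈ Icc 1 ⌊x⌋₊, (absMoebiusConvMoebius d : ℂ) * ((d:ℂ))⁻¹)
      = ∑ k ∈ Icc 1 (Nat.sqrt ⌊x⌋₊), (μ k : ℂ)/(k:ℂ)^2 := by
    rw [sq_reindex ⌊x⌋₊ (fun d => ((d:ℂ))⁻¹)]
    refine Finset.sum_congr rfl fun k _ => ?_
    rw [div_eq_mul_inv]
    congr 2
    push_cast
    ring
  have hT4 : ‖(∑ d ∈ Icc 1 ⌊x⌋₊, (absMoebiusConvMoebius d : ℂ) * (((d:ℂ))^2)⁻¹)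
      - (riemannZeta 4)⁻¹‖ ≤ 1/((Nat.sqrt ⌊x⌋₊ : ℝ))^3 := by
    rw [hS2]
    have h := moebius_partial_tail 4 (by norm_num) (Nat.sqrt ⌊x⌋₊) hK1
    norm_num at h ⊢
    exact h
  have hT2 : ‖(∑ d ∈ Icc 1 ⌊x⌋₊, (absMoebiusConvMoebius d : ℂ) * ((d:ℂ))⁻¹)
      - (riemannZeta 2)⁻¹‖ ≤ 1/((Nat.sqrt ⌊x⌋₊ : ℝ)) := by
    rw [hS1]
    have h := moebius_partial_tail 2 (by norm_num) (Nat.sqrt ⌊x⌋₊) hK1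
    norm_num at h ⊢
    exact h
  have hKR : (2:ℝ) ≤ ((Nat.sqrt ⌊x⌋₊ : ℝ)) := by exact_mod_cast hK2
  have hsx : 0 < Real.sqrt x := Real.sqrt_pos.mpr hx0
  have hxle : x ≤ 4*((Nat.sqrt ⌊x⌋₊ : ℝ))^2 := by
    nlinarith [Real.sq_sqrt (le_of_lt hx0), Real.sqrt_nonneg x, hsub]
  have h1K : 1/((Nat.sqrt ⌊x⌋₊ : ℝ)) ≤ 2/Real.sqrt x := by
    rw [div_le_div_iff₀ (by linarith) hsx]
    linarith
  have h3K : x * (1/((Nat.sqrt ⌊x⌋₊ : ℝ))^3) ≤ 8 / Real.sqrt x := by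
    have hKpos : (0:ℝ) < ((Nat.sqrt ⌊x⌋₊ : ℝ)) := by linarith
    calc x * (1/((Nat.sqrt ⌊x⌋₊ : ℝ))^3)
        ≤ (4*((Nat.sqrt ⌊x⌋₊ : ℝ))^2) * (1/((Nat.sqrt ⌊x⌋₊ : ℝ))^3) :=
          mul_le_mul_of_nonneg_right hxle (by positivity)
      _ = 4 * (1/((Nat.sqrt ⌊x⌋₊ : ℝ))) := by field_simp
      _ ≤ 4 * (2/Real.sqrt x) := by linarith
      _ = 8 / Real.sqrt x := by ring
  calc ‖riemannZeta (1 + 2 * m) * (x:ℂ) *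
          ((∑ d ∈ Icc 1 ⌊x⌋₊, (absMoebiusConvMoebius d : ℂ) * (((d:ℂ))^2)⁻¹)
            - (riemannZeta 4)⁻¹)
        - riemannZeta (2 * m)/2 *
          ((∑ d ∈ Icc 1 ⌊x⌋₊, (absMoebiusConvMoebius d : ℂ) * ((d:ℂ))⁻¹)
            - (riemannZeta 2)⁻¹)‖
      ≤ ‖riemannZeta (1 + 2 * m) * (x:ℂ) *
          ((∑ d ∈ Icc 1 ⌊x⌋₊, (absMoebiusConvMoebius d : ℂ) * (((d:ℂ))^2)⁻¹)
            - (riemannZeta 4)⁻¹)‖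
        + ‖riemannZeta (2 * m)/2 *
          ((∑ d ∈ Icc 1 ⌊x⌋₊, (absMoebiusConvMoebius d : ℂ) * ((d:ℂ))⁻¹)
            - (riemannZeta 2)⁻¹)‖ := by
        rw [sub_eq_add_neg]
        refine le_trans (norm_add_le _ _) ?_
        rw [norm_neg]
    _ ≤ ‖riemannZeta (1 + 2 * m)‖ * x * (1/((Nat.sqrt ⌊x⌋₊ : ℝ))^3)
        + ‖riemannZeta (2 * m)‖/2 * (1/((Nat.sqrt ⌊x⌋₊ : ℝ))) := by
        simp only [norm_mul, norm_div, Complex.norm_two, Complex.norm_real, Real.norm_eq_abs]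
        rw [abs_of_pos hx0]
        apply add_le_add
        · rw [mul_assoc, mul_assoc]
          exact mul_le_mul_of_nonneg_left
            (mul_le_mul_of_nonneg_left hT4 (le_of_lt hx0)) (norm_nonneg _)
        · exact mul_le_mul_of_nonneg_left hT2 (by positivity)
    _ ≤ ‖riemannZeta (1 + 2 * m)‖ * (8/Real.sqrt x)
        + ‖riemannZeta (2 * m)‖/2 * (2/Real.sqrt x) := by
        apply add_le_add
        · rw [mul_assoc]
          exact mul_le_mul_of_nonneg_left h3K (norm_nonneg _)
        · exact mul_le_mul_of_nonneg_left h1K (by positivity)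
    _ = (8 * ‖riemannZeta (1 + 2 * m)‖ + ‖riemannZeta (2 * m)‖)
          * (1/Real.sqrt x) := by
        field_simp
    _ ≤ (8 * ‖riemannZeta (1 + 2 * m)‖ + ‖riemannZeta (2 * m)‖ + 1)
          * deltaFn auxC x := by
        have hδ := delta_ge x hx
        have h0 : (0:ℝ) ≤ 1/Real.sqrt x := by positivity
        apply mul_le_mul (by linarith) hδ h0
        positivity
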